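/- A family Λ = (Λ_i)_{i∈I} of bounded linear operators Λ_i : H → H_i is a g-frame for H (i.e. there exist 0 < A ≤ B < ∞ with A‖f‖² ≤ ∑_{i∈I} ‖Λ_i f‖² ≤ B‖f‖² for all f ∈ H) if and only if the synthesis operator is well defined, bounded, and onto; that is: for every g = (g_i)_{i∈I} ∈ (⊕_{i∈I} H_i)_{ℓ²} the family (Λ_i*(g_i))_{i∈I} is summable in H, there is a constant K with ‖∑_{i∈I} Λ_i*(g_i)‖ ≤ K‖g‖ for all g, and for every f ∈ H there exists g ∈ (⊕_{i∈I} H_i)_{ℓ²} with ∑_{i∈I} Λ_i*(g_i) = f. -/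

import Mathlib

open scoped InnerProductSpace ENNReal
open ContinuousLinearMap Filter

set_option linter.unusedSectionVars false
set_option maxHeartbeats 1000000
noncomputable section GFrameAux

variable {H : Type*} [NormedAddCommGroup H] [InnerProductSpace ℂ H] [CompleteSpace H]
variable {ι : Type*} {G : ι → Type*} [∀ i, NormedAddCommGroup (G i)]
  [∀ i, InnerProductSpace ℂ (G i)] [∀ i, CompleteSpace (G i)]

lemma lp2_summable_norm_sq (g : lp G 2) : Summable fun i => ‖g i‖ ^ 2 := by
  have h := (lp.memℓp g).summable (p := 2) (by norm_num)
  simpa [Real.rpow_natCast] using h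

lemma lp2_norm_sq (g : lp G 2) : ‖g‖ ^ 2 = ∑' i, ‖g i‖ ^ 2 := by
  have h := lp.norm_rpow_eq_tsum (p := 2) (by norm_num) g
  simpa [Real.rpow_natCast] using h

lemma finite_synth_bound (Λ : ∀ i, H →L[ℂ] G i) {B : ℝ} (hB0 : 0 ≤ B)
    (hB : ∀ f : H, Summable (fun i => ‖Λ i f‖ ^ 2) ∧ ∑' i, ‖Λ i f‖ ^ 2 ≤ B * ‖f‖ ^ 2)
    (g : ∀ i, G i) (t : Finset ι) :
    ‖∑ i ∈ t, (ContinuousLinearMap.adjoint (Λ i)) (g i)‖ ≤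
      Real.sqrt B * Real.sqrt (∑ i ∈ t, ‖g i‖ ^ 2) := by
  set x := ∑ i ∈ t, (ContinuousLinearMap.adjoint (Λ i)) (g i) with hx
  have h2 : ⟪x, x⟫_ℂ = ∑ i ∈ t, ⟪g i, Λ i x⟫_ℂ := by
    rw [hx, sum_inner]
    exact Finset.sum_congr rfl fun i _ => ContinuousLinearMap.adjoint_inner_left (Λ i) x (g i)
  have h3 : ‖x‖ ^ 2 ≤ ∑ i ∈ t, ‖g i‖ * ‖Λ i x‖ := by
    rw [← inner_self_eq_norm_sq (𝕜 := ℂ) x, h2, map_sum]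
    refine Finset.sum_le_sum fun i _ => ?_
    exact (RCLike.re_le_norm _).trans (norm_inner_le_norm _ _)
  have hcs : ∑ i ∈ t, ‖g i‖ * ‖Λ i x‖ ≤
      Real.sqrt (∑ i ∈ t, ‖g i‖ ^ 2) * Real.sqrt (∑ i ∈ t, ‖Λ i x‖ ^ 2) := by
    rw [← Real.sqrt_mul (Finset.sum_nonneg fun i _ => sq_nonneg _)]
    exact Real.le_sqrt_of_sq_le (Finset.sum_mul_sq_le_sq_mul_sq t _ _)
  have hsum : ∑ i ∈ t, ‖Λ i x‖ ^ 2 ≤ B * ‖x‖ ^ 2 :=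
    ((hB x).1.sum_le_tsum t (fun i _ => sq_nonneg _)).trans (hB x).2
  have h4 : ‖x‖ ^ 2 ≤ Real.sqrt (∑ i ∈ t, ‖g i‖ ^ 2) * (Real.sqrt B * ‖x‖) := by
    calc ‖x‖ ^ 2 ≤ ∑ i ∈ t, ‖g i‖ * ‖Λ i x‖ := h3
      _ ≤ Real.sqrt (∑ i ∈ t, ‖g i‖ ^ 2) * Real.sqrt (∑ i ∈ t, ‖Λ i x‖ ^ 2) := hcs
      _ ≤ Real.sqrt (∑ i ∈ t, ‖g i‖ ^ 2) * (Real.sqrt B * ‖x‖) := by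
          gcongr
          · calc Real.sqrt (∑ i ∈ t, ‖Λ i x‖ ^ 2) ≤ Real.sqrt (B * ‖x‖ ^ 2) :=
                Real.sqrt_le_sqrt hsum
              _ = Real.sqrt B * ‖x‖ := by
                rw [Real.sqrt_mul hB0, Real.sqrt_sq (norm_nonneg _)]
  nlinarith [norm_nonneg x, Real.sqrt_nonneg B, Real.sqrt_nonneg (∑ i ∈ t, ‖g i‖ ^ 2),
    mul_nonneg (Real.sqrt_nonneg B) (Real.sqrt_nonneg (∑ i ∈ t, ‖g i‖ ^ 2))]


lemma synth_summable (Λ : ∀ i, H →L[ℂ] G i) {B : ℝ} (hB0 : 0 ≤ B)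
    (hB : ∀ f : H, Summable (fun i => ‖Λ i f‖ ^ 2) ∧ ∑' i, ‖Λ i f‖ ^ 2 ≤ B * ‖f‖ ^ 2)
    (g : lp G 2) : Summable fun i => (ContinuousLinearMap.adjoint (Λ i)) (g i) := by
  rw [summable_iff_vanishing_norm]
  intro ε hε
  have hg : Summable fun i => ‖g i‖ ^ 2 := lp2_summable_norm_sq g
  set δ : ℝ := (ε / (Real.sqrt B + 1)) ^ 2 with hδdef
  have hδ : 0 < δ := by positivity
  obtain ⟨s, hs⟩ := summable_iff_vanishing.mp hg (Set.Ioo (-δ) δ)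
    (Ioo_mem_nhds (by linarith) hδ)
  refine ⟨s, fun t ht => ?_⟩
  have h1 := finite_synth_bound Λ hB0 hB (fun i => g i) t
  have h2 : ∑ i ∈ t, ‖g i‖ ^ 2 < δ := (hs t ht).2
  have hsB : 0 ≤ Real.sqrt B := Real.sqrt_nonneg B
  calc ‖∑ i ∈ t, (ContinuousLinearMap.adjoint (Λ i)) (g i)‖
      ≤ Real.sqrt B * Real.sqrt (∑ i ∈ t, ‖g i‖ ^ 2) := h1
    _ ≤ Real.sqrt B * (ε / (Real.sqrt B + 1)) := by
        gcongr
        calc Real.sqrt (∑ i ∈ t, ‖g i‖ ^ 2) ≤ Real.sqrt δ := Real.sqrt_le_sqrt h2.le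
          _ = ε / (Real.sqrt B + 1) := by
              rw [hδdef, Real.sqrt_sq (by positivity)]
    _ < ε := by
        rw [mul_div_assoc'] at *
        rw [div_lt_iff₀ (by positivity)]
        nlinarith

lemma synth_tsum_bound (Λ : ∀ i, H →L[ℂ] G i) {B : ℝ} (hB0 : 0 ≤ B)
    (hB : ∀ f : H, Summable (fun i => ‖Λ i f‖ ^ 2) ∧ ∑' i, ‖Λ i f‖ ^ 2 ≤ B * ‖f‖ ^ 2)
    (g : lp G 2) :
    ‖∑' i, (ContinuousLinearMap.adjoint (Λ i)) (g i)‖ ≤ Real.sqrt B * ‖g‖ := by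
  have hsum := synth_summable Λ hB0 hB g
  refine le_of_tendsto hsum.hasSum.norm (Filter.Eventually.of_forall fun s => ?_)
  calc ‖∑ i ∈ s, (ContinuousLinearMap.adjoint (Λ i)) (g i)‖
      ≤ Real.sqrt B * Real.sqrt (∑ i ∈ s, ‖g i‖ ^ 2) :=
        finite_synth_bound Λ hB0 hB (fun i => g i) s
    _ ≤ Real.sqrt B * ‖g‖ := by
        gcongr
        have h1 : ∑ i ∈ s, ‖g i‖ ^ 2 ≤ ‖g‖ ^ 2 := by
          rw [lp2_norm_sq]
          exact (lp2_summable_norm_sq g).sum_le_tsum s (fun i _ => sq_nonneg _)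
        calc Real.sqrt (∑ i ∈ s, ‖g i‖ ^ 2) ≤ Real.sqrt (‖g‖ ^ 2) := Real.sqrt_le_sqrt h1
          _ = ‖g‖ := Real.sqrt_sq (norm_nonneg g)
lemma analysis_memℓp (Λ : ∀ i, H →L[ℂ] G i) (f : H)
    (hf : Summable fun i => ‖Λ i f‖ ^ 2) : Memℓp (fun i => Λ i f) 2 := by
  apply memℓp_gen
  simpa [Real.rpow_natCast] using hf

lemma synth_onto (Λ : ∀ i, H →L[ℂ] G i) {A B : ℝ} (hA : 0 < A) (hAB : A ≤ B)
    (hfr : ∀ f : H, Summable (fun i => ‖Λ i f‖ ^ 2) ∧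
      A * ‖f‖ ^ 2 ≤ ∑' i, ‖Λ i f‖ ^ 2 ∧ ∑' i, ‖Λ i f‖ ^ 2 ≤ B * ‖f‖ ^ 2) :
    ∀ f : H, ∃ g : lp G 2, ∑' i, (ContinuousLinearMap.adjoint (Λ i)) (g i) = f := by
  have hB0 : 0 ≤ B := le_trans hA.le hAB
  have hB : ∀ f : H, Summable (fun i => ‖Λ i f‖ ^ 2) ∧ ∑' i, ‖Λ i f‖ ^ 2 ≤ B * ‖f‖ ^ 2 :=
    fun f => ⟨(hfr f).1, (hfr f).2.2⟩
  -- analysis operator as lp element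
  let Θ : H → lp G 2 := fun f => ⟨fun i => Λ i f, analysis_memℓp Λ f (hfr f).1⟩
  have hsummS : ∀ f : H, Summable fun i => (ContinuousLinearMap.adjoint (Λ i)) (Λ i f) :=
    fun f => synth_summable Λ hB0 hB (Θ f)
  have hΘnorm : ∀ f : H, ‖Θ f‖ ≤ Real.sqrt B * ‖f‖ := by
    intro f
    have h1 : ‖Θ f‖ ^ 2 ≤ (Real.sqrt B * ‖f‖) ^ 2 := by
      rw [lp2_norm_sq, mul_pow, Real.sq_sqrt hB0]
      exact (hfr f).2.2
    nlinarith [norm_nonneg (Θ f), mul_nonneg (Real.sqrt_nonneg B) (norm_nonneg f)]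
  -- frame operator
  let S₀ : H →ₗ[ℂ] H :=
    { toFun := fun f => ∑' i, (ContinuousLinearMap.adjoint (Λ i)) (Λ i f)
      map_add' := by
        intro f h
        have he : (fun i => (ContinuousLinearMap.adjoint (Λ i)) (Λ i (f + h)))
            = fun i => (ContinuousLinearMap.adjoint (Λ i)) (Λ i f)
              + (ContinuousLinearMap.adjoint (Λ i)) (Λ i h) := funext fun i => by simp
        rw [he, (hsummS f).tsum_add (hsummS h)]
      map_smul' := by
        intro c f
        simp only [map_smul, RingHom.id_apply]
        exact (hsummS f).tsum_const_smul c }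
  have hS₀bound : ∀ f : H, ‖S₀ f‖ ≤ B * ‖f‖ := by
    intro f
    have h1 : ‖S₀ f‖ ≤ Real.sqrt B * ‖Θ f‖ := synth_tsum_bound Λ hB0 hB (Θ f)
    calc ‖S₀ f‖ ≤ Real.sqrt B * ‖Θ f‖ := h1
      _ ≤ Real.sqrt B * (Real.sqrt B * ‖f‖) :=
          mul_le_mul_of_nonneg_left (hΘnorm f) (Real.sqrt_nonneg B)
      _ = B * ‖f‖ := by rw [← mul_assoc, Real.mul_self_sqrt hB0]
  let S : H →L[ℂ] H := LinearMap.mkContinuous S₀ B hS₀bound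
  have hScoer : ∀ f : H, A * ‖f‖ ^ 2 ≤ RCLike.re ⟪f, S f⟫_ℂ := by
    intro f
    have h1 : HasSum (fun i => ⟪f, (ContinuousLinearMap.adjoint (Λ i)) (Λ i f)⟫_ℂ)
        ⟪f, S f⟫_ℂ := (innerSL ℂ f).hasSum (hsummS f).hasSum
    have h2 : HasSum (fun i => RCLike.re ⟪f, (ContinuousLinearMap.adjoint (Λ i)) (Λ i f)⟫_ℂ)
        (RCLike.re ⟪f, S f⟫_ℂ) := RCLike.reCLM.hasSum h1
    have h3 : (fun i => RCLike.re ⟪f, (ContinuousLinearMap.adjoint (Λ i)) (Λ i f)⟫_ℂ)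
        = fun i => ‖Λ i f‖ ^ 2 := by
      funext i
      rw [ContinuousLinearMap.adjoint_inner_right, inner_self_eq_norm_sq]
    rw [h3] at h2
    rw [← h2.tsum_eq]
    exact (hfr f).2.1
  have hSlow : ∀ f : H, A * ‖f‖ ≤ ‖S f‖ := by
    intro f
    have h1 : A * ‖f‖ ^ 2 ≤ ‖f‖ * ‖S f‖ := by
      refine (hScoer f).trans ?_
      calc RCLike.re ⟪f, S f⟫_ℂ ≤ ‖⟪f, S f⟫_ℂ‖ := RCLike.re_le_norm _
        _ ≤ ‖f‖ * ‖S f‖ := norm_inner_le_norm _ _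
    rcases eq_or_lt_of_le (norm_nonneg f) with h | h
    · simp [← h]
    · nlinarith
  have halip : AntilipschitzWith (A⁻¹).toNNReal S := by
    refine ContinuousLinearMap.antilipschitz_of_bound S fun x => ?_
    rw [Real.coe_toNNReal _ (by positivity)]
    rw [inv_mul_eq_div, le_div_iff₀ hA, mul_comm]
    exact hSlow x
  have hcl := ContinuousLinearMap.closed_range_of_antilipschitz halip
  have hclosed : IsClosed ((LinearMap.range (S : H →ₗ[ℂ] H) : Submodule ℂ H) : Set H) := by
    have h2 := congrArg (SetLike.coe) hcl
    rw [Submodule.topologicalClosure_coe] at h2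
    exact closure_eq_iff_isClosed.mp h2
  have hcomp : CompleteSpace (LinearMap.range (S : H →ₗ[ℂ] H)) := hclosed.completeSpace_coe
  have horth : (LinearMap.range (S : H →ₗ[ℂ] H))ᗮ = ⊥ := by
    rw [Submodule.eq_bot_iff]
    intro x hx
    have h0 : ⟪S x, x⟫_ℂ = 0 := hx (S x) (LinearMap.mem_range_self (S : H →ₗ[ℂ] H) x)
    have h1 : ⟪x, S x⟫_ℂ = 0 := by
      rw [← inner_conj_symm, h0, map_zero]
    have := hScoer x
    rw [h1, map_zero] at this
    have hx0 : ‖x‖ = 0 := by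
      by_contra hne
      have hpos : 0 < ‖x‖ := lt_of_le_of_ne (norm_nonneg x) (Ne.symm hne)
      nlinarith [mul_pos hA (pow_pos hpos 2)]
    simpa using hx0
  have htop : LinearMap.range (S : H →ₗ[ℂ] H) = ⊤ := by
    haveI := hcomp
    calc LinearMap.range (S : H →ₗ[ℂ] H) = (LinearMap.range (S : H →ₗ[ℂ] H))ᗮᗮ :=
          (Submodule.orthogonal_orthogonal _).symm
      _ = ⊤ := by rw [horth, Submodule.bot_orthogonal_eq_top]
  intro f
  have hf : f ∈ LinearMap.range (S : H →ₗ[ℂ] H) := htop ▸ Submodule.mem_top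
  obtain ⟨h, hh⟩ := hf
  exact ⟨Θ h, hh⟩
lemma back_frame (Λ : ∀ i, H →L[ℂ] G i)
    (h1 : ∀ g : lp G 2, Summable fun i => (ContinuousLinearMap.adjoint (Λ i)) (g i))
    (h2 : ∃ K : ℝ, ∀ g : lp G 2,
      ‖∑' i, (ContinuousLinearMap.adjoint (Λ i)) (g i)‖ ≤ K * ‖g‖)
    (h3 : ∀ f : H, ∃ g : lp G 2, ∑' i, (ContinuousLinearMap.adjoint (Λ i)) (g i) = f) :
    ∃ A B : ℝ, 0 < A ∧ A ≤ B ∧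
      ∀ f : H, Summable (fun i => ‖Λ i f‖ ^ 2) ∧
        A * ‖f‖ ^ 2 ≤ ∑' i, ‖Λ i f‖ ^ 2 ∧ ∑' i, ‖Λ i f‖ ^ 2 ≤ B * ‖f‖ ^ 2 := by
  classical
  obtain ⟨K, hK⟩ := h2
  set Kp : ℝ := max K 0 with hKpdef
  have hKp0 : 0 ≤ Kp := le_max_right K 0
  have hKp : ∀ g : lp G 2,
      ‖∑' i, (ContinuousLinearMap.adjoint (Λ i)) (g i)‖ ≤ Kp * ‖g‖ := fun g =>
    (hK g).trans (mul_le_mul_of_nonneg_right (le_max_left K 0) (norm_nonneg g))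
  -- synthesis operator as CLM
  let T₀ : lp G 2 →ₗ[ℂ] H :=
    { toFun := fun g => ∑' i, (ContinuousLinearMap.adjoint (Λ i)) (g i)
      map_add' := by
        intro g h
        have he : (fun i => (ContinuousLinearMap.adjoint (Λ i)) ((g + h) i))
            = fun i => (ContinuousLinearMap.adjoint (Λ i)) (g i)
              + (ContinuousLinearMap.adjoint (Λ i)) (h i) := by
          funext i
          rw [lp.coeFn_add, Pi.add_apply, map_add]
        rw [he, (h1 g).tsum_add (h1 h)]
      map_smul' := by
        intro c g
        simp only [RingHom.id_apply]
        have he : (fun i => (ContinuousLinearMap.adjoint (Λ i)) ((c • g) i))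
            = fun i => c • (ContinuousLinearMap.adjoint (Λ i)) (g i) := by
          funext i
          rw [lp.coeFn_smul, Pi.smul_apply, map_smul]
        rw [he, (h1 g).tsum_const_smul c] }
  let T : lp G 2 →L[ℂ] H := LinearMap.mkContinuous T₀ Kp hKp
  have hTapp : ∀ g : lp G 2, T g = ∑' i, (ContinuousLinearMap.adjoint (Λ i)) (g i) :=
    fun g => rfl
  -- upper bound
  have claim : ∀ (f : H) (s : Finset ι), ∑ i ∈ s, ‖Λ i f‖ ^ 2 ≤ Kp ^ 2 * ‖f‖ ^ 2 := by
    intro f s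
    set gs : lp G 2 := ∑ i ∈ s, lp.single 2 i (Λ i f) with hgsdef
    have hgs_apply : ∀ j, gs j = ∑ i ∈ s, (lp.single 2 i (Λ i f) : ∀ j, G j) j := by
      intro j
      rw [hgsdef, lp.coeFn_sum, Finset.sum_apply]
    have hgs_mem : ∀ j ∈ s, gs j = Λ j f := by
      intro j hj
      rw [hgs_apply j, Finset.sum_eq_single_of_mem j hj
        (fun i _ hij => lp.single_apply_ne 2 i _ (Ne.symm hij)), lp.single_apply_self]
    have hgs_nmem : ∀ j, j ∉ s → gs j = 0 := by
      intro j hj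
      rw [hgs_apply j]
      exact Finset.sum_eq_zero fun i hi => lp.single_apply_ne 2 i _ (fun h => hj (h ▸ hi))
    have hTgs : T gs = ∑ i ∈ s, (ContinuousLinearMap.adjoint (Λ i)) (Λ i f) := by
      rw [hTapp, tsum_eq_sum (fun j hj => by rw [hgs_nmem j hj, map_zero])]
      exact Finset.sum_congr rfl fun j hj => by rw [hgs_mem j hj]
    set D : ℝ := ∑ i ∈ s, ‖Λ i f‖ ^ 2 with hDdef
    have hD0 : 0 ≤ D := Finset.sum_nonneg fun i _ => sq_nonneg _
    have hinner : RCLike.re ⟪f, T gs⟫_ℂ = D := by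
      rw [hTgs, inner_sum, map_sum, hDdef]
      exact Finset.sum_congr rfl fun i _ => by
        rw [ContinuousLinearMap.adjoint_inner_right, inner_self_eq_norm_sq]
    have hgsnorm : ‖gs‖ ^ 2 = D := by
      rw [lp2_norm_sq, tsum_eq_sum (s := s) (fun j hj => by rw [hgs_nmem j hj]; simp), hDdef]
      exact Finset.sum_congr rfl fun j hj => by rw [hgs_mem j hj]
    have hmain : D ≤ ‖f‖ * (Kp * ‖gs‖) := by
      rw [← hinner]
      calc RCLike.re ⟪f, T gs⟫_ℂ ≤ ‖⟪f, T gs⟫_ℂ‖ := RCLike.re_le_norm _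
        _ ≤ ‖f‖ * ‖T gs‖ := norm_inner_le_norm _ _
        _ ≤ ‖f‖ * (Kp * ‖gs‖) := by
            exact mul_le_mul_of_nonneg_left (hKp gs) (norm_nonneg f)
    have hgsD : ‖gs‖ = Real.sqrt D := by
      rw [← hgsnorm, Real.sqrt_sq (norm_nonneg gs)]
    rw [hgsD] at hmain
    have hsq := Real.sq_sqrt hD0
    nlinarith [sq_nonneg (Real.sqrt D - Kp * ‖f‖), Real.sqrt_nonneg D,
      mul_nonneg hKp0 (norm_nonneg f)]
  have hsummable : ∀ f : H, Summable fun i => ‖Λ i f‖ ^ 2 := fun f =>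
    summable_of_sum_le (fun i => sq_nonneg _) (claim f)
  have hupper : ∀ f : H, ∑' i, ‖Λ i f‖ ^ 2 ≤ (Kp ^ 2 + 1) * ‖f‖ ^ 2 := by
    intro f
    have := (hsummable f).tsum_le_of_sum_le (claim f)
    nlinarith [sq_nonneg ‖f‖]
  -- lower bound via open mapping
  have surj : Function.Surjective T := by
    intro f
    obtain ⟨g, hg⟩ := h3 f
    exact ⟨g, by rw [hTapp]; exact hg⟩
  obtain ⟨C, hC0, hCp⟩ := ContinuousLinearMap.exists_preimage_norm_le T surj
  refine ⟨min ((C ^ 2)⁻¹) (Kp ^ 2 + 1), Kp ^ 2 + 1, ?_, min_le_right _ _, ?_⟩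
  · exact lt_min (by positivity) (by positivity)
  intro f
  refine ⟨hsummable f, ?_, hupper f⟩
  set Θf : lp G 2 := ⟨fun i => Λ i f, analysis_memℓp Λ f (hsummable f)⟩ with hΘdef
  obtain ⟨g, hgT, hgn⟩ := hCp f
  have hinner : ⟪f, T g⟫_ℂ = ⟪Θf, g⟫_ℂ := by
    have hs1 : HasSum (fun i => ⟪f, (ContinuousLinearMap.adjoint (Λ i)) (g i)⟫_ℂ)
        ⟪f, T g⟫_ℂ := by
      rw [hTapp]
      exact (innerSL ℂ f).hasSum (h1 g).hasSum
    have heq : (fun i => ⟪f, (ContinuousLinearMap.adjoint (Λ i)) (g i)⟫_ℂ)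
        = fun i => ⟪Θf i, g i⟫_ℂ := by
      funext i
      rw [ContinuousLinearMap.adjoint_inner_right]
    exact hs1.unique (by rw [heq]; exact lp.hasSum_inner (𝕜 := ℂ) Θf g)
  have hf2 : ‖f‖ ^ 2 ≤ C * ‖f‖ * ‖Θf‖ := by
    have h5 : RCLike.re ⟪f, f⟫_ℂ = ‖f‖ ^ 2 := inner_self_eq_norm_sq f
    have h6 : ⟪f, f⟫_ℂ = ⟪Θf, g⟫_ℂ := by rw [← hinner, hgT]
    calc ‖f‖ ^ 2 = RCLike.re ⟪Θf, g⟫_ℂ := by rw [← h5, h6]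
      _ ≤ ‖⟪Θf, g⟫_ℂ‖ := RCLike.re_le_norm _
      _ ≤ ‖Θf‖ * ‖g‖ := norm_inner_le_norm _ _
      _ ≤ ‖Θf‖ * (C * ‖f‖) := mul_le_mul_of_nonneg_left hgn (norm_nonneg _)
      _ = C * ‖f‖ * ‖Θf‖ := by ring
  have hΘsq : ‖Θf‖ ^ 2 = ∑' i, ‖Λ i f‖ ^ 2 := by
    rw [lp2_norm_sq]
  have hkey : ‖f‖ ^ 2 ≤ C ^ 2 * ‖Θf‖ ^ 2 := by
    nlinarith [sq_nonneg (‖f‖ - C * ‖Θf‖), norm_nonneg f, norm_nonneg Θf, hC0.le]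
  calc min ((C ^ 2)⁻¹) (Kp ^ 2 + 1) * ‖f‖ ^ 2 ≤ (C ^ 2)⁻¹ * ‖f‖ ^ 2 :=
        mul_le_mul_of_nonneg_right (min_le_left _ _) (sq_nonneg _)
    _ ≤ ∑' i, ‖Λ i f‖ ^ 2 := by
        rw [← hΘsq]
        rw [inv_mul_le_iff₀ (by positivity)]
        linarith [hkey]

end GFrameAux

/-- `Λ` is a g-frame for `H` iff the synthesis operator
`T_Λ(g) = ∑ᵢ Λᵢ*(gᵢ)` is well defined, bounded and onto. -/
theorem gframe_iff_synthesis_onto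
    {H : Type*} [NormedAddCommGroup H] [InnerProductSpace ℂ H] [CompleteSpace H]
    {ι : Type*} [Countable ι]
    {G : ι → Type*} [∀ i, NormedAddCommGroup (G i)] [∀ i, InnerProductSpace ℂ (G i)]
    [∀ i, CompleteSpace (G i)]
    (Λ : ∀ i, H →L[ℂ] G i) :
    (∃ A B : ℝ, 0 < A ∧ A ≤ B ∧
        ∀ f : H, Summable (fun i => ‖Λ i f‖ ^ 2) ∧
          A * ‖f‖ ^ 2 ≤ ∑' i, ‖Λ i f‖ ^ 2 ∧ ∑' i, ‖Λ i f‖ ^ 2 ≤ B * ‖f‖ ^ 2) ↔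
      ((∀ g : lp G 2, Summable fun i => (ContinuousLinearMap.adjoint (Λ i)) (g i)) ∧
        (∃ K : ℝ, ∀ g : lp G 2,
          ‖∑' i, (ContinuousLinearMap.adjoint (Λ i)) (g i)‖ ≤ K * ‖g‖) ∧
        (∀ f : H, ∃ g : lp G 2, ∑' i, (ContinuousLinearMap.adjoint (Λ i)) (g i) = f)) := by
  constructor
  · rintro ⟨A, B, hA, hAB, hfr⟩
    have hB0 : 0 ≤ B := le_trans hA.le hAB
    have hB : ∀ f : H, Summable (fun i => ‖Λ i f‖ ^ 2) ∧ ∑' i, ‖Λ i f‖ ^ 2 ≤ B * ‖f‖ ^ 2 :=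
      fun f => ⟨(hfr f).1, (hfr f).2.2⟩
    exact ⟨fun g => synth_summable Λ hB0 hB g,
      ⟨Real.sqrt B, fun g => synth_tsum_bound Λ hB0 hB g⟩,
      synth_onto Λ hA hAB hfr⟩
  · rintro ⟨h1, h2, h3⟩
    exact back_frame Λ h1 h2 h3
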